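/- (Strong Fano bound.) Let q ≥ 2 and let p be a joint pmf of (x, y) on Fin m × Fin q. Let Acc = ∑ over j with p_X(j) > 0 of p_X(j) * (max i, p(i | j)), and let H(y | x) = ∑ over j with p_X(j) > 0 of p_X(j) * H(p(· | j)) be the conditional entropy. Then Acc ∈ [1/q, 1] and h̄_q(Acc) ≥ H(y | x); equivalently, since h̄_q is decreasing, Acc ≤ h̄_q⁻¹(H(y | x)) = h̄_q⁻¹(H(p_Y) - I(y; x)). (Interpretation: the highest accuracy achievable by any classifier using x to predict y is at most h̄_q⁻¹(h(y) - I(y; x)).) -/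

import Mathlib

/-- `h̄_q(a) = -a log a - (1-a) log((1-a)/(q-1))`, natural log, with the
convention `0 · log 0 = 0` (Mathlib's `Real.log 0 = 0` realizes it). -/
noncomputable def hbar (q : ℕ) (a : ℝ) : ℝ :=
  -a * Real.log a - (1 - a) * Real.log ((1 - a) / ((q : ℝ) - 1))

/-- `h̄_q⁻¹ : [0, log q] → [1/q, 1]`, the inverse of the strictly decreasing
bijection `h̄_q : [1/q, 1] → [0, log q]`. -/
noncomputable def hbarInv (q : ℕ) (h : ℝ) : ℝ :=
  Function.invFunOn (hbar q) (Set.Icc (1 / (q : ℝ)) 1) h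

/-- Shannon entropy of a probability vector, in nats, convention `0 log 0 = 0`. -/
noncomputable def entropy {q : ℕ} (r : Fin q → ℝ) : ℝ :=
  -∑ i, r i * Real.log (r i)

lemma hbar_eq_qary {q : ℕ} (hq : 2 ≤ q) (a : ℝ) : hbar q a = Real.qaryEntropy q (1 - a) := by
  have hq2 : (2 : ℝ) ≤ (q : ℝ) := by exact_mod_cast hq
  have hq0 : (q : ℝ) - 1 ≠ 0 := by linarith
  have hcast : (((q : ℤ) - 1 : ℤ) : ℝ) = (q : ℝ) - 1 := by push_cast; ring
  rcases eq_or_ne a 1 with h | h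
  · subst h; simp [hbar]
  · have h1a : (1 : ℝ) - a ≠ 0 := by intro hh; apply h; linarith
    rw [hbar, Real.qaryEntropy, Real.binEntropy, hcast, Real.log_div h1a hq0,
      Real.log_inv, sub_sub_cancel, Real.log_inv]
    ring

lemma hbar_one (q : ℕ) : hbar q 1 = 0 := by simp [hbar]

lemma hbar_inv_q {q : ℕ} (hq : 2 ≤ q) : hbar q (1 / (q : ℝ)) = Real.log q := by
  have hq2 : (2 : ℝ) ≤ (q : ℝ) := by exact_mod_cast hq
  have hq0 : (q : ℝ) ≠ 0 := by linarith
  have hq1 : (q : ℝ) - 1 ≠ 0 := by linarith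
  have h1 : ((1 : ℝ) - 1 / q) / ((q : ℝ) - 1) = 1 / q := by field_simp
  have h2 : Real.log (1 / (q : ℝ)) = -Real.log q := by rw [one_div, Real.log_inv]
  rw [hbar, h1, h2]; ring

lemma hbar_continuous {q : ℕ} (hq : 2 ≤ q) : Continuous (hbar q) := by
  have h : hbar q = fun a => Real.qaryEntropy q (1 - a) := funext (hbar_eq_qary hq)
  rw [h]
  exact Real.qaryEntropy_continuous.comp (continuous_const.sub continuous_id)

lemma hbar_strictAntiOn {q : ℕ} (hq : 2 ≤ q) :
    StrictAntiOn (hbar q) (Set.Icc (1 / (q : ℝ)) 1) := by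
  intro x hx y hy hxy
  rw [hbar_eq_qary hq, hbar_eq_qary hq]
  refine Real.qaryEntropy_strictMonoOn hq ?_ ?_ (by linarith)
  · exact ⟨by linarith [hy.2], by linarith [hy.1]⟩
  · exact ⟨by linarith [hx.2], by linarith [hx.1]⟩

lemma hbar_concaveOn {q : ℕ} (hq : 2 ≤ q) :
    ConcaveOn ℝ (Set.Icc (1 / (q : ℝ)) 1) (hbar q) := by
  have hq2 : (2 : ℝ) ≤ (q : ℝ) := by exact_mod_cast hq
  have hqpos : (0 : ℝ) < 1 / (q : ℝ) := by positivity
  have hsub : ∀ x ∈ Set.Icc (1 / (q : ℝ)) 1, (1 - x) ∈ Set.Icc (0 : ℝ) 1 := by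
    intro x hx
    exact ⟨by linarith [hx.2], by linarith [hx.1]⟩
  refine ⟨convex_Icc _ _, ?_⟩
  intro x hx y hy a b ha hb hab
  have hkey := (Real.strictConcaveOn_qaryEntropy (q := q)).concaveOn.2
    (hsub x hx) (hsub y hy) ha hb hab
  have hlin : (1 : ℝ) - (a • x + b • y) = a • (1 - x) + b • (1 - y) := by
    simp only [smul_eq_mul]
    linear_combination -hab
  rw [hbar_eq_qary hq, hbar_eq_qary hq, hbar_eq_qary hq, hlin]
  exact hkey

lemma hbar_surj {q : ℕ} (hq : 2 ≤ q) {h : ℝ} (h0 : 0 ≤ h) (h1 : h ≤ Real.log q) :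
    ∃ a ∈ Set.Icc (1 / (q : ℝ)) 1, hbar q a = h := by
  have hq2 : (2 : ℝ) ≤ (q : ℝ) := by exact_mod_cast hq
  have hle : 1 / (q : ℝ) ≤ 1 := by
    rw [div_le_one (by linarith)]; linarith
  have hmem : h ∈ Set.Icc (hbar q 1) (hbar q (1 / (q : ℝ))) := by
    rw [hbar_one, hbar_inv_q hq]; exact ⟨h0, h1⟩
  obtain ⟨a, ha, hfa⟩ := intermediate_value_Icc' hle ((hbar_continuous hq).continuousOn) hmem
  exact ⟨a, ha, hfa⟩

lemma sum_le_one {q : ℕ} (r : Fin q → ℝ) (h0 : ∀ i, 0 ≤ r i) (h1 : ∑ i, r i = 1)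
    (i : Fin q) : r i ≤ 1 :=
  h1 ▸ Finset.single_le_sum (fun j _ => h0 j) (Finset.mem_univ i)

lemma entropy_nonneg {q : ℕ} (r : Fin q → ℝ) (h0 : ∀ i, 0 ≤ r i) (h1 : ∑ i, r i = 1) :
    0 ≤ entropy r := by
  rw [entropy, neg_nonneg]
  refine Finset.sum_nonpos fun i _ => ?_
  have hle := sum_le_one r h0 h1 i
  have hlog := Real.log_nonpos (h0 i) hle
  nlinarith [h0 i, hlog]

lemma max_mem_Icc {q : ℕ} (hq : 2 ≤ q) (r : Fin q → ℝ) (h0 : ∀ i, 0 ≤ r i)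
    (h1 : ∑ i, r i = 1) (i0 : Fin q) (hmax : ∀ i, r i ≤ r i0) :
    r i0 ∈ Set.Icc (1 / (q : ℝ)) 1 := by
  have hqpos : (0 : ℝ) < (q : ℝ) := by positivity
  constructor
  · have hsum : (1 : ℝ) ≤ (q : ℝ) * r i0 := by
      calc (1 : ℝ) = ∑ i, r i := h1.symm
        _ ≤ ∑ _i : Fin q, r i0 := Finset.sum_le_sum fun i _ => hmax i
        _ = (q : ℝ) * r i0 := by
          rw [Finset.sum_const, Finset.card_univ, Fintype.card_fin, nsmul_eq_mul]
    rw [div_le_iff₀ hqpos]; linarith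
  · exact sum_le_one r h0 h1 i0

lemma entropy_le_hbar {q : ℕ} (hq : 2 ≤ q) (r : Fin q → ℝ) (h0 : ∀ i, 0 ≤ r i)
    (h1 : ∑ i, r i = 1) (i0 : Fin q) (hmax : ∀ i, r i ≤ r i0) :
    entropy r ≤ hbar q (r i0) := by
  set a : ℝ := r i0 with ha_def
  have hq2 : (2 : ℝ) ≤ (q : ℝ) := by exact_mod_cast hq
  have hq1 : (0 : ℝ) < (q : ℝ) - 1 := by linarith
  have ha0 : 0 ≤ a := h0 i0
  have ha1 : a ≤ 1 := sum_le_one r h0 h1 i0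
  have hrest : ∑ i ∈ Finset.univ.erase i0, r i = 1 - a := by
    have h := Finset.add_sum_erase Finset.univ r (Finset.mem_univ i0)
    rw [h1] at h; linarith
  set s : Fin q → ℝ := fun i => if i = i0 then a else (1 - a) / ((q : ℝ) - 1) with hs_def
  have hs0 : ∀ i, 0 ≤ s i := by
    intro i; simp only [hs_def]
    split
    · exact ha0
    · apply div_nonneg <;> linarith
  have hcard : (Finset.univ.erase i0).card = q - 1 := by
    rw [Finset.card_erase_of_mem (Finset.mem_univ i0), Finset.card_univ, Fintype.card_fin]
  have hssum : ∑ i, s i = 1 := by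
    have h := (Finset.add_sum_erase Finset.univ s (Finset.mem_univ i0)).symm
    have h2 : ∑ i ∈ Finset.univ.erase i0, s i = 1 - a := by
      have h3 : ∀ i ∈ Finset.univ.erase i0, s i = (1 - a) / ((q : ℝ) - 1) := by
        intro i hi
        simp only [hs_def, if_neg (Finset.ne_of_mem_erase hi)]
      rw [Finset.sum_congr rfl h3, Finset.sum_const, hcard, nsmul_eq_mul]
      have hcast : ((q - 1 : ℕ) : ℝ) = (q : ℝ) - 1 := by
        have : 1 ≤ q := by omega
        push_cast [this]; ring
      rw [hcast]
      field_simp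
    rw [h, h2]
    simp only [hs_def, if_pos rfl]
    ring
  have hcross : ∑ i, r i * Real.log (s i)
      = a * Real.log a + (1 - a) * Real.log ((1 - a) / ((q : ℝ) - 1)) := by
    have h := (Finset.add_sum_erase Finset.univ (fun i => r i * Real.log (s i))
      (Finset.mem_univ i0)).symm
    have h2 : ∑ i ∈ Finset.univ.erase i0, r i * Real.log (s i)
        = (1 - a) * Real.log ((1 - a) / ((q : ℝ) - 1)) := by
      have h3 : ∀ i ∈ Finset.univ.erase i0, r i * Real.log (s i)
          = r i * Real.log ((1 - a) / ((q : ℝ) - 1)) := by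
        intro i hi
        simp only [hs_def, if_neg (Finset.ne_of_mem_erase hi)]
      rw [Finset.sum_congr rfl h3, ← Finset.sum_mul, hrest]
    rw [h, h2]
    simp only [hs_def, if_pos rfl]
    rw [← ha_def]
  have hkey : ∀ i, r i * Real.log (s i) - r i * Real.log (r i) ≤ s i - r i := by
    intro i
    rcases eq_or_lt_of_le (h0 i) with h | h
    · rw [← h]; simp [hs0 i]
    · rcases eq_or_lt_of_le (hs0 i) with hs | hs
      · exfalso
        have hne : i ≠ i0 := by
          intro he
          rw [he] at h
          have : s i0 = a := if_pos rfl
          rw [he, this] at hs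
          linarith
        have hsz : (1 - a) / ((q : ℝ) - 1) = 0 := by
          have : s i = (1 - a) / ((q : ℝ) - 1) := if_neg hne
          linarith [this ▸ hs]
        have h1a : 1 - a = 0 := by
          field_simp at hsz
          linarith
        have hri : r i = 0 := by
          have hz : ∑ j ∈ Finset.univ.erase i0, r j = 0 := by rw [hrest, h1a]
          have := (Finset.sum_eq_zero_iff_of_nonneg fun j _ => h0 j).mp hz i
            (Finset.mem_erase.mpr ⟨hne, Finset.mem_univ i⟩)
          exact this
        linarith
      · have hlog := Real.log_le_sub_one_of_pos (div_pos hs h)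
        rw [Real.log_div (ne_of_gt hs) (ne_of_gt h)] at hlog
        have hmul := mul_le_mul_of_nonneg_left hlog (le_of_lt h)
        have heq : r i * (s i / r i - 1) = s i - r i := by
          field_simp
        nlinarith [hmul, heq]
  have hgibbs : ∑ i, r i * Real.log (s i) ≤ ∑ i, r i * Real.log (r i) := by
    have h := Finset.sum_le_sum fun i (_ : i ∈ Finset.univ) => hkey i
    rw [Finset.sum_sub_distrib, Finset.sum_sub_distrib, h1, hssum] at h
    linarith
  rw [entropy, hbar]
  rw [hcross] at hgibbs
  linarith

/-- Strong Fano bound: for a joint pmf `p` of `(x, y)` on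
`Fin m × Fin q` (`q ≥ 2`, `p (j, i)` with `j` the value of `x`), writing
`Acc = ∑_{j : p_X(j) > 0} p_X(j) max_i p(i|j)` and
`H(y|x) = ∑_{j : p_X(j) > 0} p_X(j) H(p(·|j))`, we have `Acc ∈ [1/q, 1]` and
`h̄_q(Acc) ≥ H(y|x)`; equivalently `Acc ≤ h̄_q⁻¹(H(p_Y) - I(y; x))`. -/
theorem stmt_11 (m q : ℕ) (hq : 2 ≤ q) (p : Fin m × Fin q → ℝ)
    (hp0 : ∀ t, 0 ≤ p t) (hp1 : ∑ t, p t = 1)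
    (pX : Fin m → ℝ) (hpX : ∀ j, pX j = ∑ i, p (j, i))
    (pY : Fin q → ℝ) (hpY : ∀ i, pY i = ∑ j, p (j, i))
    (cond : Fin m → Fin q → ℝ) (hcond : ∀ j i, cond j i = p (j, i) / pX j)
    (Acc : ℝ) (hAcc : Acc = ∑ j ∈ Finset.univ.filter (fun j : Fin m => 0 < pX j),
      pX j * Finset.univ.sup' ⟨⟨0, by omega⟩, Finset.mem_univ _⟩ (cond j))
    (Hyx : ℝ) (hHyx : Hyx = ∑ j ∈ Finset.univ.filter (fun j : Fin m => 0 < pX j),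
      pX j * entropy (cond j))
    (I : ℝ) (hI : I = entropy pY - Hyx) :
    Acc ∈ Set.Icc (1 / (q : ℝ)) 1 ∧ Hyx ≤ hbar q Acc ∧
      Acc ≤ hbarInv q (entropy pY - I) := by
  have hq2 : (2 : ℝ) ≤ (q : ℝ) := by exact_mod_cast hq
  set F := Finset.univ.filter (fun j : Fin m => 0 < pX j) with hF_def
  set A : Fin m → ℝ :=
    fun j => Finset.univ.sup' ⟨⟨0, by omega⟩, Finset.mem_univ _⟩ (cond j) with hA_def
  have hpX0 : ∀ j, 0 ≤ pX j := fun j =>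
    (hpX j) ▸ Finset.sum_nonneg fun i _ => hp0 _
  have hsum_pX : ∑ j, pX j = 1 := by
    simp_rw [hpX]
    rw [← Fintype.sum_prod_type]
    exact hp1
  have hF1 : ∑ j ∈ F, pX j = 1 := by
    rw [hF_def, Finset.sum_filter_of_ne fun j _ h => lt_of_le_of_ne (hpX0 j) (Ne.symm h)]
    exact hsum_pX
  -- per-class facts
  have hclass : ∀ j ∈ F, (A j ∈ Set.Icc (1 / (q : ℝ)) 1) ∧ entropy (cond j) ≤ hbar q (A j) := by
    intro j hj
    have hjpos : 0 < pX j := (Finset.mem_filter.mp hj).2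
    have hc0 : ∀ i, 0 ≤ cond j i := fun i => by
      rw [hcond]; exact div_nonneg (hp0 _) (hpX0 j)
    have hc1 : ∑ i, cond j i = 1 := by
      simp_rw [hcond]
      rw [← Finset.sum_div, ← hpX j, div_self (ne_of_gt hjpos)]
    obtain ⟨i0, -, hi0⟩ := Finset.exists_mem_eq_sup'
      (⟨⟨0, by omega⟩, Finset.mem_univ _⟩ : (Finset.univ : Finset (Fin q)).Nonempty) (cond j)
    have hAj : A j = cond j i0 := hi0
    have hmax : ∀ i, cond j i ≤ cond j i0 := fun i =>
      hAj ▸ Finset.le_sup' (cond j) (Finset.mem_univ i)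
    rw [hAj]
    exact ⟨max_mem_Icc hq (cond j) hc0 hc1 i0 hmax,
      entropy_le_hbar hq (cond j) hc0 hc1 i0 hmax⟩
  have hAcc' : Acc = ∑ j ∈ F, pX j * A j := hAcc
  have hAccIcc : Acc ∈ Set.Icc (1 / (q : ℝ)) 1 := by
    constructor
    · calc 1 / (q : ℝ) = ∑ j ∈ F, pX j * (1 / (q : ℝ)) := by
            rw [← Finset.sum_mul, hF1, one_mul]
        _ ≤ ∑ j ∈ F, pX j * A j :=
            Finset.sum_le_sum fun j hj =>
              mul_le_mul_of_nonneg_left (hclass j hj).1.1 (hpX0 j)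
        _ = Acc := hAcc'.symm
    · calc Acc = ∑ j ∈ F, pX j * A j := hAcc'
        _ ≤ ∑ j ∈ F, pX j * 1 :=
            Finset.sum_le_sum fun j hj =>
              mul_le_mul_of_nonneg_left (hclass j hj).1.2 (hpX0 j)
        _ = 1 := by rw [← Finset.sum_mul] at *; simp [hF1]
  have hHb : Hyx ≤ hbar q Acc := by
    have step1 : Hyx ≤ ∑ j ∈ F, pX j * hbar q (A j) := by
      rw [hHyx]
      exact Finset.sum_le_sum fun j hj =>
        mul_le_mul_of_nonneg_left (hclass j hj).2 (hpX0 j)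
    have step2 : ∑ j ∈ F, pX j * hbar q (A j) ≤ hbar q (∑ j ∈ F, pX j * A j) := by
      have h := (hbar_concaveOn hq).le_map_sum (fun j _ => hpX0 j) hF1
        (fun j hj => (hclass j hj).1)
      simpa [smul_eq_mul] using h
    rw [hAcc']
    exact le_trans step1 step2
  refine ⟨hAccIcc, hHb, ?_⟩
  -- third part
  have hEq : entropy pY - I = Hyx := by rw [hI]; ring
  rw [hEq]
  have hHyx0 : 0 ≤ Hyx := by
    rw [hHyx]
    refine Finset.sum_nonneg fun j hj => ?_
    have hjpos : 0 < pX j := (Finset.mem_filter.mp hj).2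
    have hc0 : ∀ i, 0 ≤ cond j i := fun i => by
      rw [hcond]; exact div_nonneg (hp0 _) (hpX0 j)
    have hc1 : ∑ i, cond j i = 1 := by
      simp_rw [hcond]
      rw [← Finset.sum_div, ← hpX j, div_self (ne_of_gt hjpos)]
    exact mul_nonneg (hpX0 j) (entropy_nonneg (cond j) hc0 hc1)
  have hql : 1 / (q : ℝ) ≤ 1 := by
    rw [div_le_one (by linarith)]; linarith
  have hlmem : (1 / (q : ℝ)) ∈ Set.Icc (1 / (q : ℝ)) 1 := ⟨le_refl _, hql⟩
  have hHyx_le : Hyx ≤ Real.log q := by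
    have := (hbar_strictAntiOn hq).antitoneOn hlmem hAccIcc hAccIcc.1
    rw [hbar_inv_q hq] at this
    linarith
  obtain ⟨b, hb, hfb⟩ := hbar_surj hq hHyx0 hHyx_le
  have hpos := Function.invFunOn_pos (f := hbar q) (s := Set.Icc (1 / (q : ℝ)) 1)
    ⟨b, hb, hfb⟩
  have hinv_mem : hbarInv q Hyx ∈ Set.Icc (1 / (q : ℝ)) 1 := hpos.1
  have hinv_eq : hbar q (hbarInv q Hyx) = Hyx := hpos.2
  by_contra hlt
  push_neg at hlt
  have := hbar_strictAntiOn hq hinv_mem hAccIcc hlt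
  rw [hinv_eq] at this
  linarith
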